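/- arXiv:1501.01234 — 4 statements merged into one kernel-verified Lean document; each statement's English description precedes it below -/
import Mathlib

section
/- Let Y₀ and Y₁ be random variables on a probability space (Ω, 𝒜, P) taking values in {1, …, k}, and assume the monotone treatment effect assumption P(Y₁ ≥ Y₀) = 1. Fix j ∈ {1, …, k} with P(Y₀ = j) > 0. Then every median m of the conditional distribution of Y₁ given the event {Y₀ = j} satisfies j ≤ m. -/
open MeasureTheory ProbabilityTheory

/-- Part 1 of the Proposition on bounds under monotonicity: under the monotone
treatment effect assumption `P(Y₁ ≥ Y₀) = 1`, for each `j ∈ {1, …, k}` with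
`P(Y₀ = j) > 0`, every median `m` of the conditional distribution of `Y₁` given
`{Y₀ = j}` satisfies `j ≤ m`. -/
theorem median_cond_eq_ge_of_monotone
    {Ω : Type*} [MeasurableSpace Ω] (P : Measure Ω) [IsProbabilityMeasure P]
    (k : ℕ) (hk : 2 ≤ k)
    (Y₀ Y₁ : Ω → ℤ) (hY₀ : Measurable Y₀) (hY₁ : Measurable Y₁)
    (hY₀range : ∀ ω, Y₀ ω ∈ Set.Icc (1 : ℤ) k)
    (hY₁range : ∀ ω, Y₁ ω ∈ Set.Icc (1 : ℤ) k)
    (hmono : P {ω | Y₀ ω ≤ Y₁ ω} = 1)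
    (j : ℤ) (hj : j ∈ Set.Icc (1 : ℤ) k)
    (hpos : 0 < P {ω | Y₀ ω = j})
    (m : ℝ)
    (hmed_le : (1 / 2 : ENNReal) ≤ P[|{ω | Y₀ ω = j}] {ω | (Y₁ ω : ℝ) ≤ m})
    (hmed_ge : (1 / 2 : ENNReal) ≤ P[|{ω | Y₀ ω = j}] {ω | m ≤ (Y₁ ω : ℝ)}) :
    (j : ℝ) ≤ m := by
  by_contra hlt
  push_neg at hlt
  have hA : MeasurableSet {ω | Y₀ ω = j} := hY₀ (measurableSet_singleton j)
  have hcompl : P {ω | Y₀ ω ≤ Y₁ ω}ᶜ = 0 := by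
    have := measure_compl (μ := P) (measurableSet_le hY₀ hY₁) (measure_ne_top P _)
    rw [this, hmono, measure_univ]
    simp
  have hsub : {ω | Y₀ ω = j} ∩ {ω | (Y₁ ω : ℝ) ≤ m} ⊆ {ω | Y₀ ω ≤ Y₁ ω}ᶜ := by
    intro ω ⟨h0, h1⟩
    simp only [Set.mem_compl_iff, Set.mem_setOf_eq, not_le]
    rw [show Y₀ ω = j from h0]
    have : (Y₁ ω : ℝ) < (j : ℝ) := lt_of_le_of_lt h1 hlt
    exact_mod_cast this
  have hzero : P ({ω | Y₀ ω = j} ∩ {ω | (Y₁ ω : ℝ) ≤ m}) = 0 :=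
    le_antisymm (hcompl ▸ measure_mono hsub) zero_le
  rw [cond_apply hA, hzero, mul_zero] at hmed_le
  simp at hmed_le
end

section
/- Let Y₀ and Y₁ be random variables on a probability space (Ω, 𝒜, P) taking values in {1, …, k}, and assume the monotone treatment effect assumption P(Y₁ ≥ Y₀) = 1. Fix j ∈ {1, …, k} with P(Y₀ ≤ j) > 0. Then the lower median of Y₀ under the conditional measure P(·|Y₀ ≤ j) is less than or equal to the lower median of Y₁ under the conditional measure P(·|Y₀ ≤ j). -/
open MeasureTheory ProbabilityTheory

/-- The lower median of an integer-valued random variable `X` under a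
probability measure `Q`: the least integer `m` with `Q(X ≤ m) ≥ 1/2`. -/
noncomputable def lowerMedian {Ω : Type*} [MeasurableSpace Ω]
    (Q : Measure Ω) (X : Ω → ℤ) : ℤ :=
  sInf {m : ℤ | (1 / 2 : ENNReal) ≤ Q {ω | X ω ≤ m}}

/-- Part 3 of the Proposition on bounds under monotonicity: under the monotone
treatment effect assumption `P(Y₁ ≥ Y₀) = 1`, for each `j` with `P(Y₀ ≤ j) > 0`,
the lower median of `Y₀` under the conditional measure `P(·|Y₀ ≤ j)` is at most
the lower median of `Y₁` under the same conditional measure. -/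
theorem lowerMedian_cond_le_of_monotone
    {Ω : Type*} [MeasurableSpace Ω] (P : Measure Ω) [IsProbabilityMeasure P]
    (k : ℕ) (hk : 2 ≤ k)
    (Y₀ Y₁ : Ω → ℤ) (hY₀ : Measurable Y₀) (hY₁ : Measurable Y₁)
    (hY₀range : ∀ ω, Y₀ ω ∈ Set.Icc (1 : ℤ) k)
    (hY₁range : ∀ ω, Y₁ ω ∈ Set.Icc (1 : ℤ) k)
    (hmono : P {ω | Y₀ ω ≤ Y₁ ω} = 1)
    (j : ℤ) (hj : j ∈ Set.Icc (1 : ℤ) k)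
    (hpos : 0 < P {ω | Y₀ ω ≤ j}) :
    lowerMedian (P[|{ω | Y₀ ω ≤ j}]) Y₀ ≤ lowerMedian (P[|{ω | Y₀ ω ≤ j}]) Y₁ := by
  set s := {ω | Y₀ ω ≤ j} with hs
  set Q := P[|s] with hQ
  have hsm : MeasurableSet s := hY₀ measurableSet_Iic
  have hQprob : IsProbabilityMeasure Q :=
    ProbabilityTheory.cond_isProbabilityMeasure hpos.ne'
  -- Y₀ ≤ Y₁ a.e. under Q
  have hnull : P {ω | ¬ Y₀ ω ≤ Y₁ ω} = 0 := by
    have hms : MeasurableSet {ω | Y₀ ω ≤ Y₁ ω} := measurableSet_le hY₀ hY₁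
    have := measure_compl (μ := P) hms (measure_ne_top _ _)
    have hset : {ω | Y₀ ω ≤ Y₁ ω}ᶜ = {ω | ¬ Y₀ ω ≤ Y₁ ω} := by
      ext ω; simp
    rw [hset] at this
    rw [this, measure_univ, hmono, tsub_self]
  have hQae : ∀ᵐ ω ∂Q, Y₀ ω ≤ Y₁ ω := by
    have : Q {ω | ¬ Y₀ ω ≤ Y₁ ω} = 0 := by
      have hle : Q {ω | ¬ Y₀ ω ≤ Y₁ ω} ≤ (P s)⁻¹ * P {ω | ¬ Y₀ ω ≤ Y₁ ω} := by
        rw [hQ, ProbabilityTheory.cond_apply hsm]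
        exact mul_le_mul_right (measure_mono (Set.inter_subset_right)) _
      rw [hnull, mul_zero] at hle
      exact le_antisymm hle bot_le
    exact (MeasureTheory.ae_iff).2 this
  -- subset inclusion of the defining sets
  have hsub : {m : ℤ | (1 / 2 : ENNReal) ≤ Q {ω | Y₁ ω ≤ m}} ⊆
      {m : ℤ | (1 / 2 : ENNReal) ≤ Q {ω | Y₀ ω ≤ m}} := by
    intro m hm
    refine le_trans hm (measure_mono_ae ?_)
    filter_upwards [hQae] with ω h01 h1m
    exact le_trans h01 h1m
  have hne : {m : ℤ | (1 / 2 : ENNReal) ≤ Q {ω | Y₁ ω ≤ m}}.Nonempty := by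
    refine ⟨(k : ℤ), ?_⟩
    have : {ω | Y₁ ω ≤ (k : ℤ)} = Set.univ := by
      ext ω; simpa using (hY₁range ω).2
    simp only [Set.mem_setOf_eq, this, measure_univ]
    exact le_of_lt (by norm_num : (1 / 2 : ENNReal) < 1)
  have hbdd : BddBelow {m : ℤ | (1 / 2 : ENNReal) ≤ Q {ω | Y₀ ω ≤ m}} := by
    refine ⟨1, fun m hm => ?_⟩
    by_contra hlt
    push_neg at hlt
    have hempty : {ω | Y₀ ω ≤ m} = ∅ := by
      ext ω
      simp only [Set.mem_setOf_eq, Set.mem_empty_iff_false, iff_false, not_le]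
      exact lt_of_lt_of_le hlt (hY₀range ω).1
    rw [Set.mem_setOf_eq, hempty] at hm
    simp at hm
  exact csInf_le_csInf hbdd hne hsub
end

section
/- Let Y₀ and Y₁ be random variables on a probability space (Ω, 𝒜, P) taking values in {1, 2, 3}, and assume the monotone at-most-one-category effect: P(Y₀ ≤ Y₁ ≤ Y₀ + 1) = 1. If P(Y₀ = 1) > 0 and P(Y₀ = 2) > 0, then the conditional one-step transition probabilities are identified from the marginal distributions: P(Y₁ = 2 | Y₀ = 1) = 1 − P(Y₁ = 1)/P(Y₀ = 1), and P(Y₁ = 3 | Y₀ = 2) = (P(Y₁ = 3) − P(Y₀ = 3))/P(Y₀ = 2). -/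
open MeasureTheory ProbabilityTheory

/-- For a 3-level ordinal outcome under the monotone at-most-one-category
effect `P(Y₀ ≤ Y₁ ≤ Y₀ + 1) = 1`, the conditional one-step transition
probabilities are identified from the marginals:
`P(Y₁ = 2 | Y₀ = 1) = 1 − P(Y₁ = 1)/P(Y₀ = 1)` and
`P(Y₁ = 3 | Y₀ = 2) = (P(Y₁ = 3) − P(Y₀ = 3))/P(Y₀ = 2)`. -/
theorem transition_probs_identified_three_levels
    {Ω : Type*} [MeasurableSpace Ω] (P : Measure Ω) [IsProbabilityMeasure P]
    (Y₀ Y₁ : Ω → ℤ) (hY₀ : Measurable Y₀) (hY₁ : Measurable Y₁)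
    (hY₀range : ∀ ω, Y₀ ω ∈ Set.Icc (1 : ℤ) 3)
    (hY₁range : ∀ ω, Y₁ ω ∈ Set.Icc (1 : ℤ) 3)
    (hmono : P {ω | Y₀ ω ≤ Y₁ ω ∧ Y₁ ω ≤ Y₀ ω + 1} = 1)
    (h1 : 0 < P {ω | Y₀ ω = 1}) (h2 : 0 < P {ω | Y₀ ω = 2}) :
    P[|{ω | Y₀ ω = 1}] {ω | Y₁ ω = 2}
        = 1 - P {ω | Y₁ ω = 1} / P {ω | Y₀ ω = 1} ∧
    P[|{ω | Y₀ ω = 2}] {ω | Y₁ ω = 3}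
        = (P {ω | Y₁ ω = 3} - P {ω | Y₀ ω = 3}) / P {ω | Y₀ ω = 2} := by
  -- measurable sets
  have m0 : ∀ n : ℤ, MeasurableSet {ω | Y₀ ω = n} := fun n => hY₀ (measurableSet_singleton n)
  have m1 : ∀ n : ℤ, MeasurableSet {ω | Y₁ ω = n} := fun n => hY₁ (measurableSet_singleton n)
  -- a.e. monotonicity
  have hA : MeasurableSet {ω | Y₀ ω ≤ Y₁ ω ∧ Y₁ ω ≤ Y₀ ω + 1} := by
    exact (measurableSet_le hY₀ hY₁).inter (measurableSet_le hY₁ (hY₀.add_const 1))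
  have hae : ∀ᵐ ω ∂P, Y₀ ω ≤ Y₁ ω ∧ Y₁ ω ≤ Y₀ ω + 1 := by
    rw [ae_iff]
    have := measure_compl hA (measure_ne_top P _)
    rw [hmono, measure_univ] at this
    simpa [Set.compl_setOf] using this
  have fin : ∀ s : Set Ω, P s ≠ ⊤ := fun s => measure_ne_top _ _
  -- key measure identities
  have eq1 : P {ω | Y₁ ω = 1} = P ({ω | Y₀ ω = 1} ∩ {ω | Y₁ ω = 1}) := by
    apply measure_congr
    rw [Filter.eventuallyEq_set]
    filter_upwards [hae] with ω hω
    have r0 := hY₀range ω; have r1 := hY₁range ω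
    simp only [Set.mem_setOf_eq, Set.mem_inter_iff, Set.mem_Icc] at *
    omega
  have eq2 : P {ω | Y₀ ω = 1}
      = P ({ω | Y₀ ω = 1} ∩ {ω | Y₁ ω = 1}) + P ({ω | Y₀ ω = 1} ∩ {ω | Y₁ ω = 2}) := by
    have hdisj : Disjoint ({ω | Y₀ ω = 1} ∩ {ω | Y₁ ω = 1})
        ({ω | Y₀ ω = 1} ∩ {ω | Y₁ ω = 2}) := by
      apply Set.disjoint_left.2
      rintro ω ⟨-, h⟩ ⟨-, h'⟩
      simp only [Set.mem_setOf_eq] at h h'; omega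
    have hu : P {ω | Y₀ ω = 1}
        = P (({ω | Y₀ ω = 1} ∩ {ω | Y₁ ω = 1}) ∪ ({ω | Y₀ ω = 1} ∩ {ω | Y₁ ω = 2})) := by
      apply measure_congr
      rw [Filter.eventuallyEq_set]
      filter_upwards [hae] with ω hω
      have r0 := hY₀range ω; have r1 := hY₁range ω
      simp only [Set.mem_setOf_eq, Set.mem_inter_iff, Set.mem_union, Set.mem_Icc] at *
      omega
    rw [hu, measure_union hdisj ((m0 1).inter (m1 2))]
  have eq3 : P {ω | Y₁ ω = 3}
      = P {ω | Y₀ ω = 3} + P ({ω | Y₀ ω = 2} ∩ {ω | Y₁ ω = 3}) := by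
    have hdisj : Disjoint {ω | Y₀ ω = 3} ({ω | Y₀ ω = 2} ∩ {ω | Y₁ ω = 3}) := by
      apply Set.disjoint_left.2
      rintro ω h ⟨h', -⟩
      simp only [Set.mem_setOf_eq] at h h'; omega
    have hu : P {ω | Y₁ ω = 3}
        = P ({ω | Y₀ ω = 3} ∪ ({ω | Y₀ ω = 2} ∩ {ω | Y₁ ω = 3})) := by
      apply measure_congr
      rw [Filter.eventuallyEq_set]
      filter_upwards [hae] with ω hω
      have r0 := hY₀range ω; have r1 := hY₁range ω
      simp only [Set.mem_setOf_eq, Set.mem_inter_iff, Set.mem_union, Set.mem_Icc] at *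
      omega
    rw [hu, measure_union hdisj ((m0 2).inter (m1 3))]
  constructor
  · rw [cond_apply (m0 1), ← ENNReal.div_eq_inv_mul]
    rw [eq1]
    refine ENNReal.eq_sub_of_add_eq ?_ ?_
    · exact (ENNReal.div_lt_top (fin _) h1.ne').ne
    · rw [ENNReal.div_add_div_same, add_comm, ← eq2,
        ENNReal.div_self h1.ne' (fin _)]
  · rw [cond_apply (m0 2), ← ENNReal.div_eq_inv_mul]
    congr 1
    rw [eq3, ENNReal.add_sub_cancel_left (fin _)]
end

section
/- Let k ≥ 2, let s₁ < s₂ < ⋯ < s_{k−1} be real thresholds, and define the step function g : ℝ → ℤ by g(z) = 1 + #{i ∈ {1, …, k−1} : s_i ≤ z}, so g takes values in {1, …, k}. Let c > 0. Then g(z + c) ≤ g(z) + 1 for all z ∈ ℝ if and only if c ≤ s_{i+1} − s_i for every i ∈ {1, …, k−2}. That is, a constant additive effect c on the latent scale moves every observation up by at most one category on the observed scale exactly when c does not exceed the smallest gap between consecutive thresholds. -/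
open Finset

/-- Latent-scale step function: with strictly increasing thresholds
`s₁ < ⋯ < s_{k−1}` and `g(z) = 1 + #{i : s i ≤ z}` (values in `{1, …, k}`),
a constant additive latent effect `c > 0` moves every observation up by at
most one category, i.e. `g(z + c) ≤ g(z) + 1` for all `z`, if and only if
`c` does not exceed any gap `s_{i+1} − s_i` between consecutive thresholds. -/
theorem at_most_one_category_iff_gap
    (k : ℕ) (hk : 2 ≤ k)
    (s : Fin (k - 1) → ℝ) (hs : StrictMono s)
    (c : ℝ) (hc : 0 < c)
    (g : ℝ → ℤ)
    (hg : ∀ z : ℝ, g z = 1 + ((Finset.univ.filter fun i : Fin (k - 1) => s i ≤ z).card : ℤ)) :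
    (∀ z : ℝ, g (z + c) ≤ g z + 1) ↔
      (∀ i j : Fin (k - 1), (j : ℕ) = (i : ℕ) + 1 → c ≤ s j - s i) := by
  constructor
  · intro h i j hij
    by_contra hlt
    push_neg at hlt
    have hz := h (s j - c)
    rw [hg, hg] at hz
    have hB : (Finset.univ.filter fun i' : Fin (k - 1) => s i' ≤ s j - c + c)
        = Finset.Iic j := by
      ext i'
      simp [sub_add_cancel, hs.le_iff_le]
    have hA : (Finset.univ.filter fun i' : Fin (k - 1) => s i' ≤ s j - c)
        ⊆ Finset.Iio i := by
      intro i' hi'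
      simp only [mem_filter, mem_univ, true_and] at hi'
      simp only [Finset.mem_Iio]
      by_contra hle
      push_neg at hle
      have h2 : s i ≤ s i' := hs.monotone hle
      linarith
    have hcardB : (Finset.Iic j).card = (j : ℕ) + 1 := by
      simp [Fin.card_Iic]
    have hcardA : (Finset.univ.filter fun i' : Fin (k - 1) => s i' ≤ s j - c).card
        ≤ (i : ℕ) := by
      calc _ ≤ (Finset.Iio i).card := Finset.card_le_card hA
        _ = (i : ℕ) := by simp [Fin.card_Iio]
    rw [hB, hcardB] at hz
    push_cast at hz
    omega
  · intro h z
    rw [hg, hg]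
    set A := Finset.univ.filter fun i : Fin (k - 1) => s i ≤ z with hAdef
    set B := Finset.univ.filter fun i : Fin (k - 1) => s i ≤ z + c with hBdef
    have hAB : A ⊆ B := by
      intro i hi
      simp only [hAdef, hBdef, mem_filter, mem_univ, true_and] at *
      linarith
    have hgap : ∀ i j : Fin (k - 1), i < j → c ≤ s j - s i := by
      intro i j hij
      have hi1 : (i : ℕ) + 1 < k - 1 := lt_of_le_of_lt (Nat.succ_le_of_lt hij) j.isLt
      set i1 : Fin (k - 1) := ⟨(i : ℕ) + 1, hi1⟩ with hi1def
      have h1 : c ≤ s i1 - s i := h i i1 rfl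
      have h2 : s i1 ≤ s j := hs.monotone (by
        simp only [Fin.le_def, hi1def]
        exact Nat.succ_le_of_lt hij)
      linarith
    have hsd : (B \ A).card ≤ 1 := by
      rw [Finset.card_le_one]
      intro a ha b hb
      simp only [Finset.mem_sdiff, hAdef, hBdef, mem_filter, mem_univ, true_and,
        not_le] at ha hb
      by_contra hne
      rcases lt_or_gt_of_ne hne with hlt | hlt
      · have := hgap a b hlt
        linarith [ha.2, hb.1]
      · have := hgap b a hlt
        linarith [hb.2, ha.1]
    have : B.card ≤ A.card + 1 := by
      have := Finset.card_sdiff_add_card_eq_card hAB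
      omega
    push_cast
    omega
end
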